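/- For every integer r ≥ 3, the rainbow 2-connectivity of the complete bipartite graph K_{r,r} equals 3, i.e., rc_2(K_{r,r}) = 3. -/
import Mathlib


open SimpleGraph

/-- The complete bipartite graph `K_{r,r}` with both parts `Fin r`. -/
abbrev Krr (r : ℕ) : SimpleGraph (Fin r ⊕ Fin r) :=
  completeBipartiteGraph (Fin r) (Fin r)

/-- A walk is a rainbow path (w.r.t. edge-coloring `c`) if it is a path and
all its edges receive pairwise distinct colors. -/
def RainbowPath {V α : Type*} {G : SimpleGraph V} (c : Sym2 V → α) {u v : V}
    (p : G.Walk u v) : Prop :=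
  p.IsPath ∧ (p.edges.map c).Nodup

/-- Two `u`-`v` walks are internally disjoint if they share no vertices other
than `u` and `v`. -/
def IntDisjoint {V : Type*} {G : SimpleGraph V} {u v : V}
    (p q : G.Walk u v) : Prop :=
  ∀ x, x ∈ p.support → x ∈ q.support → x = u ∨ x = v

/-- `G` admits a `j`-edge-coloring under which every two distinct vertices are
joined by at least `k` internally disjoint rainbow paths. -/
def HasRainbowKColoring {V : Type*} (G : SimpleGraph V) (k j : ℕ) : Prop :=
  ∃ c : Sym2 V → Fin j, ∀ u v : V, u ≠ v →
    ∃ P : Fin k → G.Walk u v, Function.Injective P ∧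
      (∀ i, RainbowPath c (P i)) ∧
      ∀ i i', i ≠ i' → IntDisjoint (P i) (P i')

/-- The rainbow `k`-connectivity: the least number of colors as above. -/
noncomputable def rck {V : Type*} (G : SimpleGraph V) (k : ℕ) : ℕ :=
  sInf {j | HasRainbowKColoring G k j}

namespace S2
variable {r : ℕ}

/-! ### Arithmetic helpers in `ZMod r` -/

def fc (i : Fin r) : ZMod r := (i.val : ZMod r)

lemma fc_inj [NeZero r] {i j : Fin r} (h : fc i = fc j) : i = j := by
  have : i.val = j.val := by
    rw [← ZMod.val_cast_of_lt i.isLt, ← ZMod.val_cast_of_lt j.isLt]; exact congrArg ZMod.val h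
  exact Fin.ext this

def toF [NeZero r] (z : ZMod r) : Fin r := ⟨z.val, ZMod.val_lt z⟩

lemma fc_toF [NeZero r] (z : ZMod r) : fc (toF z) = z := by
  simp [fc, toF, ZMod.natCast_val, ZMod.cast_id]

lemma cast_ne_zero (hr : 3 ≤ r) {k : ℕ} (h0 : 0 < k) (hk : k < r) : ((k:ℕ) : ZMod r) ≠ 0 := by
  haveI : NeZero r := ⟨by omega⟩
  intro h
  rw [ZMod.natCast_eq_zero_iff] at h
  exact absurd (Nat.le_of_dvd h0 h) (by omega)

lemma one_ne (hr : 3 ≤ r) : (1 : ZMod r) ≠ 0 := by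
  have := cast_ne_zero (r := r) hr (k := 1) one_pos (by omega); simpa using this

lemma two_ne (hr : 3 ≤ r) : (2 : ZMod r) ≠ 0 := by
  have := cast_ne_zero (r := r) hr (k := 2) two_pos (by omega); simpa using this

/-! ### The 3-coloring -/

def col (i j : Fin r) : Fin 3 :=
  if fc j = fc i then 0 else if fc j = fc i + 1 then 1 else 2

lemma col_zero {i j : Fin r} (h : fc j = fc i) : col i j = 0 := by simp [col, h]

lemma col_one (hr : 3 ≤ r) {i j : Fin r} (h : fc j = fc i + 1) : col i j = 1 := by
  have h0 : fc j ≠ fc i := by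
    rw [h]; intro hh; exact one_ne hr (by linear_combination hh)
  simp only [col, if_neg h0, if_pos h]

lemma col_two {i j : Fin r} (h1 : fc j ≠ fc i) (h2 : fc j ≠ fc i + 1) : col i j = 2 := by
  simp [col, h1, h2]

lemma col_ne_zero {i j : Fin r} (h : fc j ≠ fc i) : col i j ≠ 0 := by
  unfold col; split_ifs with a b <;> simp_all

def fcol : (Fin r ⊕ Fin r) → (Fin r ⊕ Fin r) → Fin 3
  | .inl i, .inr j => col i j
  | .inr j, .inl i => col i j
  | _, _ => 0

def C : Sym2 (Fin r ⊕ Fin r) → Fin 3 :=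
  Sym2.lift ⟨fcol, by rintro (i|i) (j|j) <;> rfl⟩

lemma C_lr (i j : Fin r) : C s(.inl i, .inr j) = col i j := rfl
lemma C_rl (i j : Fin r) : C s(.inr j, .inl i) = col i j := rfl

/-! ### Walks in `Krr r` -/

lemma adjlr (i j : Fin r) : (Krr r).Adj (.inl i) (.inr j) := by simp
lemma adjrl (i j : Fin r) : (Krr r).Adj (.inr i) (.inl j) := by simp

open SimpleGraph.Walk

def W1 (a b : Fin r) : (Krr r).Walk (.inl a) (.inr b) := cons (adjlr a b) nil
def W3 (a y x b : Fin r) : (Krr r).Walk (.inl a) (.inr b) :=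
  cons (adjlr a y) (cons (adjrl y x) (cons (adjlr x b) nil))
def WLL (a y a' : Fin r) : (Krr r).Walk (.inl a) (.inl a') :=
  cons (adjlr a y) (cons (adjrl y a') nil)
def WRR (b x b' : Fin r) : (Krr r).Walk (.inr b) (.inr b') :=
  cons (adjrl b x) (cons (adjlr x b') nil)

section colorsAbstract
variable (c : Sym2 (Fin r ⊕ Fin r) → Fin 3)

lemma rb_W1 (a b : Fin r) : RainbowPath c (W1 a b) := by
  constructor
  · rw [Walk.isPath_def]; simp [W1]
  · simp [W1]

lemma rb_WLL {a y a' : Fin r} (h : a ≠ a')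
    (hc : c s(.inl a, .inr y) ≠ c s(.inr y, .inl a')) : RainbowPath c (WLL a y a') := by
  constructor
  · rw [Walk.isPath_def]; simp [WLL, h]
  · simp [WLL, hc]

lemma rb_WRR {b x b' : Fin r} (h : b ≠ b')
    (hc : c s(.inr b, .inl x) ≠ c s(.inl x, .inr b')) : RainbowPath c (WRR b x b') := by
  constructor
  · rw [Walk.isPath_def]; simp [WRR, h]
  · simp [WRR, hc]

lemma rb_W3 {a y x b : Fin r} (hx : x ≠ a) (hy : y ≠ b)
    (h1 : c s(.inl a, .inr y) ≠ c s(.inr y, .inl x))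
    (h2 : c s(.inl a, .inr y) ≠ c s(.inl x, .inr b))
    (h3 : c s(.inr y, .inl x) ≠ c s(.inl x, .inr b)) : RainbowPath c (W3 a y x b) := by
  constructor
  · rw [Walk.isPath_def]; simp [W3, hx, hy, Ne.symm hx, Ne.symm hy]
  · simp [W3, h1, h2, h3]

end colorsAbstract

lemma id_W1_W3 (a y x b : Fin r) : IntDisjoint (W1 a b) (W3 a y x b) := by
  intro z h1 _; simp [W1] at h1; tauto

lemma id_W3_W1 (a y x b : Fin r) : IntDisjoint (W3 a y x b) (W1 a b) := by
  intro z _ h2; simp [W1] at h2; tauto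

lemma id_WLL {a y y' a' : Fin r} (h : y ≠ y') : IntDisjoint (WLL a y a') (WLL a y' a') := by
  intro z h1 h2; simp [WLL] at h1 h2
  rcases h1 with h1|h1|h1 <;> rcases h2 with h2|h2|h2 <;> subst_vars <;> simp_all

lemma id_WRR {b x x' b' : Fin r} (h : x ≠ x') : IntDisjoint (WRR b x b') (WRR b x' b') := by
  intro z h1 h2; simp [WRR] at h1 h2
  rcases h1 with h1|h1|h1 <;> rcases h2 with h2|h2|h2 <;> subst_vars <;> simp_all

lemma W1_ne_W3 (a y x b : Fin r) : W1 a b ≠ W3 a y x b := by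
  intro h; have := congrArg Walk.length h; simp [W1, W3] at this

lemma WLL_ne {a y y' a' : Fin r} (h : y ≠ y') : WLL a y a' ≠ WLL a y' a' := by
  intro hh; have := congrArg Walk.support hh; simp [WLL] at this; exact h this

lemma WRR_ne {b x x' b' : Fin r} (h : x ≠ x') : WRR b x b' ≠ WRR b x' b' := by
  intro hh; have := congrArg Walk.support hh; simp [WRR] at this; exact h this

/-! ### Packaging pairs of walks -/

def Good {V : Type*} {G : SimpleGraph V} (c : Sym2 V → Fin 3) (u v : V) : Prop :=
  ∃ P : Fin 2 → G.Walk u v, Function.Injective P ∧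
      (∀ i, RainbowPath c (P i)) ∧
      ∀ i i', i ≠ i' → IntDisjoint (P i) (P i')

lemma pack {V : Type*} {G : SimpleGraph V} {c : Sym2 V → Fin 3} {u v : V}
    (w1 w2 : G.Walk u v) (hne : w1 ≠ w2) (h1 : RainbowPath c w1) (h2 : RainbowPath c w2)
    (d12 : IntDisjoint w1 w2) (d21 : IntDisjoint w2 w1) : Good (G := G) c u v := by
  refine ⟨![w1, w2], ?_, ?_, ?_⟩
  · intro i i' hh; fin_cases i <;> fin_cases i' <;> simp_all
  · intro i; fin_cases i
    · exact h1
    · exact h2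
  · intro i i' hii
    fin_cases i <;> fin_cases i' <;> simp_all

lemma rev_pack {V : Type*} {G : SimpleGraph V} {c : Sym2 V → Fin 3} {u v : V}
    (h : Good (G := G) c u v) : Good (G := G) c v u := by
  obtain ⟨P, hinj, hrb, hd⟩ := h
  refine ⟨fun i => (P i).reverse, ?_, ?_, ?_⟩
  · intro i i' hh
    apply hinj
    have := congrArg Walk.reverse hh
    simpa using this
  · intro i
    obtain ⟨hp, hn⟩ := hrb i
    exact ⟨hp.reverse, by simpa [Walk.edges_reverse, List.map_reverse] using hn⟩
  · intro i i' hne z h1 h2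
    have := hd i i' hne z (by simpa using h1) (by simpa using h2)
    tauto

/-! ### The key constructions -/

lemma keyLR (hr : 3 ≤ r) (a b : Fin r) : Good (G := Krr r) C (.inl a) (.inr b) := by
  haveI : NeZero r := ⟨by omega⟩
  have h1' := one_ne (r := r) hr
  have h2' := two_ne (r := r) hr
  by_cases hb1 : fc b = fc a + 1
  · set x := toF (fc a - 1) with hxdef
    have hxa : fc x = fc a - 1 := fc_toF _
    have hx : x ≠ a := by
      intro h; rw [h] at hxa; exact h1' (by linear_combination hxa)
    have hy : a ≠ b := by
      intro h; rw [h] at hb1; exact h1' (by linear_combination -hb1)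
    have cA : col a a = 0 := col_zero rfl
    have cB : col x a = 1 := col_one hr (by rw [hxa]; ring)
    have cC : col x b = 2 := col_two
      (by rw [hb1, hxa]; intro hh; exact h2' (by linear_combination hh))
      (by rw [hb1, hxa]; intro hh; exact h1' (by linear_combination hh))
    exact pack (W1 a b) (W3 a a x b) (W1_ne_W3 _ _ _ _) (rb_W1 C a b)
      (rb_W3 C hx hy (show col a a ≠ col x a by rw [cA, cB]; decide)
        (show col a a ≠ col x b by rw [cA, cC]; decide)
        (show col x a ≠ col x b by rw [cB, cC]; decide))
      (id_W1_W3 _ _ _ _) (id_W3_W1 _ _ _ _)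
  · by_cases hb2 : fc b = fc a + 2
    · set x := toF (fc a + 1) with hxdef
      have hxa : fc x = fc a + 1 := fc_toF _
      have hx : x ≠ a := by
        intro h; rw [h] at hxa; exact h1' (by linear_combination -hxa)
      have hy : a ≠ b := by
        intro h; rw [h] at hb2; exact h2' (by linear_combination -hb2)
      have cA : col a a = 0 := col_zero rfl
      have cB : col x a = 2 := col_two
        (by rw [hxa]; intro hh; exact h1' (by linear_combination -hh))
        (by rw [hxa]; intro hh; exact h2' (by linear_combination -hh))
      have cC : col x b = 1 := col_one hr (by rw [hb2, hxa]; ring)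
      exact pack (W1 a b) (W3 a a x b) (W1_ne_W3 _ _ _ _) (rb_W1 C a b)
        (rb_W3 C hx hy (show col a a ≠ col x a by rw [cA, cB]; decide)
          (show col a a ≠ col x b by rw [cA, cC]; decide)
          (show col x a ≠ col x b by rw [cB, cC]; decide))
        (id_W1_W3 _ _ _ _) (id_W3_W1 _ _ _ _)
    · set x := toF (fc a + 1) with hxdef
      have hxa : fc x = fc a + 1 := fc_toF _
      have hx : x ≠ a := by
        intro h; rw [h] at hxa; exact h1' (by linear_combination -hxa)
      have hy : x ≠ b := by
        intro h; apply hb1; rw [← h, hxa]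
      have cA : col a x = 1 := col_one hr hxa
      have cB : col x x = 0 := col_zero rfl
      have cC : col x b = 2 := col_two
        (by rw [hxa]; exact hb1)
        (by rw [hxa]; intro hh; exact hb2 (by linear_combination hh))
      exact pack (W1 a b) (W3 a x x b) (W1_ne_W3 _ _ _ _) (rb_W1 C a b)
        (rb_W3 C hx hy (show col a x ≠ col x x by rw [cA, cB]; decide)
          (show col a x ≠ col x b by rw [cA, cC]; decide)
          (show col x x ≠ col x b by rw [cB, cC]; decide))
        (id_W1_W3 _ _ _ _) (id_W3_W1 _ _ _ _)

lemma keyLL (hr : 3 ≤ r) (a a' : Fin r) (h : a ≠ a') : Good (G := Krr r) C (.inl a) (.inl a') := by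
  haveI : NeZero r := ⟨by omega⟩
  have hfc : fc a ≠ fc a' := fun hh => h (fc_inj hh)
  refine pack (WLL a a a') (WLL a a' a') (WLL_ne h)
    (rb_WLL C h ?_) (rb_WLL C h ?_) (id_WLL h) (id_WLL h.symm)
  · show col a a ≠ col a' a
    rw [col_zero rfl]
    exact (col_ne_zero hfc).symm
  · show col a a' ≠ col a' a'
    rw [show col a' a' = 0 from col_zero rfl]
    exact col_ne_zero hfc.symm
  -- note: WLL_ne needs y ≠ y' which is h : a ≠ a'

lemma keyRR (hr : 3 ≤ r) (b b' : Fin r) (h : b ≠ b') : Good (G := Krr r) C (.inr b) (.inr b') := by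
  haveI : NeZero r := ⟨by omega⟩
  have hfc : fc b ≠ fc b' := fun hh => h (fc_inj hh)
  refine pack (WRR b b b') (WRR b b' b') (WRR_ne h)
    (rb_WRR C h ?_) (rb_WRR C h ?_) (id_WRR h) (id_WRR h.symm)
  · show col b b ≠ col b b'
    rw [col_zero rfl]
    exact (col_ne_zero hfc.symm).symm
  · show col b' b ≠ col b' b'
    rw [show col b' b' = 0 from col_zero rfl]
    exact col_ne_zero hfc

lemma upper (hr : 3 ≤ r) : HasRainbowKColoring (Krr r) 2 3 := by
  refine ⟨C, ?_⟩
  rintro (a|a) (b|b) huv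
  · exact keyLL hr a b (by simpa using huv)
  · exact keyLR hr a b
  · exact rev_pack (keyLR hr b a)
  · exact keyRR hr a b (by simpa using huv)

/-! ### The lower bound -/

lemma rb_len {V : Type*} {j : ℕ} {G : SimpleGraph V} {c : Sym2 V → Fin j} {u v : V}
    {p : G.Walk u v} (h : RainbowPath c p) : p.length ≤ j := by
  have := h.2.length_le_card
  simpa using this

lemma short_walk {a b : Fin r} (p : (Krr r).Walk (.inl a) (.inr b)) (hlen : p.length ≤ 2) :
    p = W1 a b := by
  cases p with
  | cons h q =>
    rename_i w
    cases w with
    | inl w => simp at h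
    | inr y =>
      cases q with
      | nil => rfl
      | cons h' q' =>
        rename_i w'
        cases w' with
        | inr w' => simp at h'
        | inl x =>
          cases q' with
          | cons h'' q'' => simp [Walk.length_cons] at hlen

lemma lower (hr : 3 ≤ r) {j : ℕ} (hj : j ≤ 2) : ¬ HasRainbowKColoring (Krr r) 2 j := by
  rintro ⟨c, hc⟩
  have hz : (0:ℕ) < r := by omega
  obtain ⟨P, hinj, hrb, -⟩ := hc (.inl ⟨0, hz⟩) (.inr ⟨0, hz⟩) (by simp)
  have e0 := short_walk (P 0) (le_trans (rb_len (hrb 0)) hj)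
  have e1 := short_walk (P 1) (le_trans (rb_len (hrb 1)) hj)
  have : (0 : Fin 2) = 1 := hinj (e0.trans e1.symm)
  simp at this

end S2

theorem stmt2 (r : ℕ) (hr : 3 ≤ r) : rck (Krr r) 2 = 3 := by
  have hu : 3 ∈ {j | HasRainbowKColoring (Krr r) 2 j} := S2.upper hr
  apply le_antisymm
  · exact Nat.sInf_le hu
  · apply le_csInf ⟨3, hu⟩
    intro j hj
    by_contra hlt
    push_neg at hlt
    exact S2.lower hr (by omega) hj
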